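/- Fix ρ ∈ (0,1], r > 0, α ∈ (0,1) and c ∈ (0,1). Let Z_0, Z_1, Z_2, … be i.i.d. standard normal random variables and set p_i = Φ(−√ρ·Z_0 − √(1−ρ)·Z_i) for i ≥ 1. Then the limit L := lim_{m→∞} Pr( ((1/m) Σ_{i=1}^m p_i^r)^{1/r} ≤ c ) exists, and L ≤ α if and only if c^r ≤ g_{ρ,r}(−Φ^{−1}(α)). In particular, the largest threshold c for which the asymptotic type-I error of the generalized-mean test is at most α under equicorrelation ρ is ( g_{ρ,r}(−Φ^{−1}(α)) )^{1/r}. -/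

import Mathlib

open MeasureTheory ProbabilityTheory Filter

open scoped NNReal ENNReal

/-- Standard normal CDF `Φ`. -/
noncomputable def Phi (x : ℝ) : ℝ := ((gaussianReal 0 1 : Measure ℝ) (Set.Iic x)).toReal

/-- Standard normal quantile function `Φ⁻¹` (a two-sided inverse of `Φ` on `(0,1)`). -/
noncomputable def PhiInv (y : ℝ) : ℝ := Function.invFun Phi y

/-- `g_{ρ,r}(z) = E[p₁^r | Z₀ = z] = ∫ Φ(-√ρ z - √(1-ρ) x)^r φ(x) dx`. -/
noncomputable def gFun (ρ r z : ℝ) : ℝ :=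
  ∫ x : ℝ, Phi (-(Real.sqrt ρ * z) - Real.sqrt (1 - ρ) * x) ^ r
    ∂(gaussianReal 0 1 : Measure ℝ)

section PhiLemmas

open Set

lemma gaussianPDFReal_le_one (x : ℝ) : gaussianPDFReal 0 1 x ≤ 1 := by
  rw [gaussianPDFReal]
  have h1 : Real.exp (-(x - 0) ^ 2 / (2 * ((1:ℝ≥0):ℝ))) ≤ 1 := by
    rw [Real.exp_le_one_iff]
    have h0 : (0:ℝ) ≤ (x - 0)^2 := sq_nonneg _
    apply div_nonpos_of_nonpos_of_nonneg <;> [linarith; norm_num]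
  have h2 : (Real.sqrt (2 * Real.pi * ((1:ℝ≥0):ℝ)))⁻¹ ≤ 1 := by
    rw [inv_le_one_iff₀]
    right
    rw [show ((2:ℝ) * Real.pi * ((1:ℝ≥0):ℝ)) = 2 * Real.pi by push_cast; ring]
    nlinarith [Real.pi_gt_three, Real.sq_sqrt (by positivity : (0:ℝ) ≤ 2 * Real.pi),
      Real.sqrt_nonneg (2 * Real.pi)]
  calc (Real.sqrt (2 * Real.pi * ((1:ℝ≥0):ℝ)))⁻¹ * Real.exp (-(x - 0) ^ 2 / (2 * ((1:ℝ≥0):ℝ)))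
      ≤ 1 * 1 := mul_le_mul h2 h1 (Real.exp_nonneg _) zero_le_one
    _ = 1 := by norm_num

lemma gauss_meas_le (s : Set ℝ) : (gaussianReal 0 1 : Measure ℝ) s ≤ volume s := by
  rw [gaussianReal_apply 0 one_ne_zero s]
  calc ∫⁻ x in s, gaussianPDF 0 1 x ≤ ∫⁻ _ in s, 1 := by
        apply lintegral_mono
        intro x
        rw [gaussianPDF]
        exact ENNReal.ofReal_le_of_le_toReal (by simpa using gaussianPDFReal_le_one x)
    _ = volume s := by simp

lemma disj_Iic_Ioc (x y : ℝ) : Disjoint (Iic x) (Ioc x y) := by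
  rw [Set.disjoint_left]
  rintro a (ha : a ≤ x) ⟨hb, -⟩
  linarith

lemma gauss_split (x y : ℝ) (hxy : x ≤ y) :
    (gaussianReal 0 1 : Measure ℝ) (Iic y)
      = (gaussianReal 0 1 : Measure ℝ) (Iic x) + (gaussianReal 0 1 : Measure ℝ) (Ioc x y) := by
  rw [← measure_union (disj_Iic_Ioc x y) measurableSet_Ioc, Iic_union_Ioc_eq_Iic hxy]

lemma Phi_mono : Monotone Phi := fun x y hxy =>
  ENNReal.toReal_mono (measure_ne_top _ _) (measure_mono (Iic_subset_Iic.2 hxy))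

lemma Phi_lipschitz : LipschitzWith 1 Phi := by
  have key : ∀ x y : ℝ, x ≤ y → Phi y - Phi x ≤ y - x := by
    intro x y hxy
    have h1 : (gaussianReal 0 1 : Measure ℝ) (Ioc x y) ≤ ENNReal.ofReal (y - x) := by
      calc (gaussianReal 0 1 : Measure ℝ) (Ioc x y) ≤ volume (Ioc x y) := gauss_meas_le _
        _ = ENNReal.ofReal (y - x) := by rw [Real.volume_Ioc]
    rw [Phi, Phi, gauss_split x y hxy, ENNReal.toReal_add (measure_ne_top _ _) (measure_ne_top _ _)]
    have := ENNReal.toReal_mono ENNReal.ofReal_ne_top h1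
    rw [ENNReal.toReal_ofReal (by linarith)] at this
    linarith
  rw [lipschitzWith_iff_dist_le_mul]
  intro x y
  rcases le_total x y with h | h
  · rw [Real.dist_eq, Real.dist_eq, abs_of_nonpos (by linarith [Phi_mono h]),
      abs_of_nonpos (by linarith)]
    simpa using key x y h
  · rw [Real.dist_eq, Real.dist_eq, abs_of_nonneg (by linarith [Phi_mono h]),
      abs_of_nonneg (by linarith)]
    simpa using key y x h

lemma Phi_continuous : Continuous Phi := Phi_lipschitz.continuous

lemma Phi_measurable : Measurable Phi := Phi_continuous.measurable

lemma gauss_pos_of_volume_pos {s : Set ℝ} (h : 0 < volume s) :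
    0 < (gaussianReal 0 1 : Measure ℝ) s := by
  by_contra hcon
  push_neg at hcon
  have h0 : (gaussianReal 0 1 : Measure ℝ) s = 0 := le_antisymm hcon zero_le
  have := gaussianReal_absolutelyContinuous' 0 one_ne_zero h0
  exact absurd this (by simpa using h.ne')

lemma Phi_strictMono : StrictMono Phi := by
  intro x y hxy
  have hpos : 0 < (gaussianReal 0 1 : Measure ℝ) (Ioc x y) :=
    gauss_pos_of_volume_pos (by rw [Real.volume_Ioc]; simp [sub_pos.2 hxy])
  rw [Phi, Phi, gauss_split x y hxy.le,
    ENNReal.toReal_add (measure_ne_top _ _) (measure_ne_top _ _)]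
  have : 0 < ((gaussianReal 0 1 : Measure ℝ) (Ioc x y)).toReal :=
    ENNReal.toReal_pos hpos.ne' (measure_ne_top _ _)
  linarith

lemma Phi_pos (x : ℝ) : 0 < Phi x :=
  ENNReal.toReal_pos (gauss_pos_of_volume_pos (by simp)).ne' (measure_ne_top _ _)

lemma gauss_singleton (x : ℝ) : (gaussianReal 0 1 : Measure ℝ) {x} = 0 :=
  gaussianReal_absolutelyContinuous 0 one_ne_zero Real.volume_singleton

lemma gauss_Iic_add_Ioi (x : ℝ) :
    (gaussianReal 0 1 : Measure ℝ) (Iic x) + (gaussianReal 0 1 : Measure ℝ) (Ioi x) = 1 := by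
  rw [← measure_union (by rw [Set.disjoint_left]; rintro a (ha : a ≤ x) (hb : x < a); linarith)
    measurableSet_Ioi, Iic_union_Ioi]
  simp

lemma Phi_lt_one (x : ℝ) : Phi x < 1 := by
  have hpos : 0 < (gaussianReal 0 1 : Measure ℝ) (Ioi x) :=
    gauss_pos_of_volume_pos (by simp)
  have h : (gaussianReal 0 1 : Measure ℝ) (Iic x) < 1 := by
    rw [← gauss_Iic_add_Ioi x]
    exact ENNReal.lt_add_right (measure_ne_top _ _) hpos.ne'
  have := ENNReal.toReal_strict_mono ENNReal.one_ne_top h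
  simpa [Phi] using this

lemma gauss_map_neg : (gaussianReal 0 1 : Measure ℝ).map (fun x => -x) = gaussianReal 0 1 := by
  have h := gaussianReal_map_const_mul (μ := 0) (v := 1) (-1)
  simp only [mul_zero] at h
  have h2 : (fun x : ℝ => -1 * x) = (fun x : ℝ => -x) := by funext x; ring
  have h3 : (⟨(-1:ℝ)^2, sq_nonneg _⟩ : ℝ≥0) * 1 = 1 := by
    ext; norm_num
  rw [h2] at h
  rw [h]
  congr 1

lemma gauss_Ioi (x : ℝ) :
    (gaussianReal 0 1 : Measure ℝ) (Ioi x) = (gaussianReal 0 1 : Measure ℝ) (Ici x) := by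
  have h : Ici x = Ioi x ∪ {x} := by
    ext y
    simp only [mem_Ici, mem_Ioi, union_singleton, mem_insert_iff]
    constructor
    · intro h; rcases eq_or_lt_of_le h with h | h
      · exact Or.inl h.symm
      · exact Or.inr h
    · rintro (rfl | h) <;> [exact le_rfl; exact h.le]
  rw [h, measure_union (by rw [Set.disjoint_left]; rintro a (ha : x < a) rfl; exact lt_irrefl _ ha)
    (measurableSet_singleton x), gauss_singleton, add_zero]

lemma Phi_neg (x : ℝ) : Phi (-x) = 1 - Phi x := by
  have h1 : (gaussianReal 0 1 : Measure ℝ) (Iic (-x)) = (gaussianReal 0 1 : Measure ℝ) (Ioi x) := by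
    conv_lhs => rw [← gauss_map_neg]
    rw [Measure.map_apply measurable_neg measurableSet_Iic, gauss_Ioi]
    congr 1
    ext y
    simp [neg_le]
  have h2 := gauss_Iic_add_Ioi x
  rw [Phi, Phi, h1]
  have h3 := ENNReal.toReal_add (a := (gaussianReal 0 1 : Measure ℝ) (Iic x))
    (b := (gaussianReal 0 1 : Measure ℝ) (Ioi x)) (measure_ne_top _ _) (measure_ne_top _ _)
  rw [h2] at h3
  simp only [ENNReal.toReal_one] at h3
  linarith

lemma Phi_tendsto_atTop : Tendsto Phi atTop (nhds 1) := by
  have h := tendsto_measure_Iic_atTop (gaussianReal 0 1 : Measure ℝ)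
  simp only [measure_univ] at h
  have := (ENNReal.tendsto_toReal ENNReal.one_ne_top).comp h
  rw [ENNReal.toReal_one] at this
  exact this

lemma Phi_tendsto_atBot : Tendsto Phi atBot (nhds 0) := by
  have key : Phi = fun x => 1 - Phi (-x) := by
    funext x
    rw [Phi_neg]
    ring
  rw [key]
  have h3 : Tendsto (fun x : ℝ => -x) atBot atTop := tendsto_neg_atBot_atTop
  have h4 : Tendsto (fun x : ℝ => Phi (-x)) atBot (nhds 1) := Phi_tendsto_atTop.comp h3
  have h5 : Tendsto (fun x : ℝ => 1 - Phi (-x)) atBot (nhds (1 - 1)) :=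
    tendsto_const_nhds.sub h4
  simpa using h5

lemma Phi_mem_range {y : ℝ} (hy : y ∈ Ioo (0:ℝ) 1) : ∃ x, Phi x = y := by
  obtain ⟨a, ha⟩ := (Phi_tendsto_atBot.eventually_lt_const hy.1).exists
  obtain ⟨b, hb⟩ := (Phi_tendsto_atTop.eventually_const_lt hy.2).exists
  have hmem : y ∈ Icc (Phi a) (Phi b) := ⟨ha.le, hb.le⟩
  obtain ⟨x, hx⟩ := intermediate_value_univ a b Phi_continuous hmem
  exact ⟨x, hx⟩

lemma Phi_PhiInv {y : ℝ} (hy : y ∈ Ioo (0:ℝ) 1) : Phi (PhiInv y) = y :=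
  Function.invFun_eq (Phi_mem_range hy)

end PhiLemmas

section GLemmas

/-- The integrand of `gFun`. -/
noncomputable def Ffun (ρ r z x : ℝ) : ℝ :=
  Phi (-(Real.sqrt ρ * z) - Real.sqrt (1 - ρ) * x) ^ r

lemma gFun_def (ρ r z : ℝ) :
    gFun ρ r z = ∫ x : ℝ, Ffun ρ r z x ∂(gaussianReal 0 1 : Measure ℝ) := rfl

variable {ρ r : ℝ}

lemma Ffun_pos (z x : ℝ) : 0 < Ffun ρ r z x :=
  Real.rpow_pos_of_pos (Phi_pos _) r

lemma Ffun_le_one (hr : 0 < r) (z x : ℝ) : Ffun ρ r z x ≤ 1 :=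
  Real.rpow_le_one (Phi_pos _).le (Phi_lt_one _).le hr.le

lemma Ffun_measurable_comp {δ : Type*} [MeasurableSpace δ] {f g : δ → ℝ}
    (hf : Measurable f) (hg : Measurable g) :
    Measurable (fun a => Ffun ρ r (f a) (g a)) := by
  unfold Ffun
  apply Measurable.pow _ measurable_const
  exact Phi_measurable.comp (((hf.const_mul _).neg).sub (hg.const_mul _))

lemma Ffun_measurable_right (z : ℝ) : Measurable (fun x : ℝ => Ffun ρ r z x) :=
  Ffun_measurable_comp measurable_const measurable_id

lemma Ffun_norm_le (hr : 0 < r) (z x : ℝ) : ‖Ffun ρ r z x‖ ≤ 1 := by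
  rw [Real.norm_eq_abs, abs_of_nonneg (Ffun_pos z x).le]
  exact Ffun_le_one hr z x

lemma Ffun_integrable (hr : 0 < r) (z : ℝ) :
    Integrable (fun x => Ffun ρ r z x) (gaussianReal 0 1 : Measure ℝ) := by
  apply Integrable.mono' (integrable_const (1:ℝ))
    (Ffun_measurable_right z).aestronglyMeasurable
  exact Filter.Eventually.of_forall fun x => Ffun_norm_le hr z x

lemma gFun_strictAnti (hρ : 0 < ρ) (hr : 0 < r) : StrictAnti (gFun ρ r) := by
  intro z1 z2 h
  have hpt : ∀ x, 0 < Ffun ρ r z1 x - Ffun ρ r z2 x := by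
    intro x
    have harg : -(Real.sqrt ρ * z2) - Real.sqrt (1 - ρ) * x
        < -(Real.sqrt ρ * z1) - Real.sqrt (1 - ρ) * x := by
      have hs : 0 < Real.sqrt ρ := Real.sqrt_pos.2 hρ
      nlinarith
    have := Real.rpow_lt_rpow (Phi_pos _).le (Phi_strictMono harg) hr
    simpa [Ffun] using this
  have key : 0 < gFun ρ r z1 - gFun ρ r z2 := by
    rw [gFun_def, gFun_def,
      ← integral_sub (Ffun_integrable hr z1) (Ffun_integrable hr z2)]
    rw [integral_pos_iff_support_of_nonneg (fun x => (hpt x).le)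
      ((Ffun_integrable hr z1).sub (Ffun_integrable hr z2))]
    have hsupp : Function.support (fun x => Ffun ρ r z1 x - Ffun ρ r z2 x) = Set.univ :=
      Set.eq_univ_of_forall fun x => (hpt x).ne'
    rw [hsupp]
    simp
  linarith

lemma gFun_continuous (hr : 0 < r) : Continuous (gFun ρ r) := by
  apply continuous_of_dominated (bound := fun _ => (1:ℝ))
  · exact fun z => (Ffun_measurable_right z).aestronglyMeasurable
  · exact fun z => Filter.Eventually.of_forall fun x => Ffun_norm_le hr z x
  · exact integrable_const 1
  · refine Filter.Eventually.of_forall fun x => ?_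
    apply Continuous.rpow_const
    · exact Phi_continuous.comp (((continuous_const.mul continuous_id).neg).sub continuous_const)
    · exact fun z => Or.inr hr.le

lemma gFun_tendsto_atTop (hρ : 0 < ρ) (hr : 0 < r) : Tendsto (gFun ρ r) atTop (nhds 0) := by
  have h0 : (0:ℝ) = ∫ _ : ℝ, (0:ℝ) ∂(gaussianReal 0 1 : Measure ℝ) := by simp
  rw [h0]
  apply tendsto_integral_filter_of_dominated_convergence (bound := fun _ => (1:ℝ))
  · exact Filter.Eventually.of_forall fun z => (Ffun_measurable_right z).aestronglyMeasurable
  · exact Filter.Eventually.of_forall fun z =>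
      Filter.Eventually.of_forall fun x => Ffun_norm_le hr z x
  · exact integrable_const 1
  · refine Filter.Eventually.of_forall fun x => ?_
    have harg : Tendsto (fun z : ℝ => -(Real.sqrt ρ * z) - Real.sqrt (1 - ρ) * x) atTop atBot := by
      apply tendsto_atBot_add_const_right
      exact (tendsto_neg_atTop_atBot.comp
        ((tendsto_const_mul_atTop_of_pos (Real.sqrt_pos.2 hρ)).2 tendsto_id))
    have hphi : Tendsto (fun z : ℝ => Phi (-(Real.sqrt ρ * z) - Real.sqrt (1 - ρ) * x))
        atTop (nhds 0) := Phi_tendsto_atBot.comp harg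
    have hcont : ContinuousAt (fun t : ℝ => t ^ r) 0 :=
      Real.continuousAt_rpow_const 0 r (Or.inr hr.le)
    have := hcont.tendsto.comp hphi
    rw [Real.zero_rpow hr.ne'] at this
    exact this

lemma gFun_tendsto_atBot (hρ : 0 < ρ) (hr : 0 < r) : Tendsto (gFun ρ r) atBot (nhds 1) := by
  have h0 : (1:ℝ) = ∫ _ : ℝ, (1:ℝ) ∂(gaussianReal 0 1 : Measure ℝ) := by simp
  rw [h0]
  apply tendsto_integral_filter_of_dominated_convergence (bound := fun _ => (1:ℝ))
  · exact Filter.Eventually.of_forall fun z => (Ffun_measurable_right z).aestronglyMeasurable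
  · exact Filter.Eventually.of_forall fun z =>
      Filter.Eventually.of_forall fun x => Ffun_norm_le hr z x
  · exact integrable_const 1
  · refine Filter.Eventually.of_forall fun x => ?_
    have harg : Tendsto (fun z : ℝ => -(Real.sqrt ρ * z) - Real.sqrt (1 - ρ) * x) atBot atTop := by
      apply tendsto_atTop_add_const_right
      exact (tendsto_neg_atBot_atTop.comp
        ((tendsto_const_mul_atBot_of_pos (Real.sqrt_pos.2 hρ)).2 tendsto_id))
    have hphi : Tendsto (fun z : ℝ => Phi (-(Real.sqrt ρ * z) - Real.sqrt (1 - ρ) * x))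
        atBot (nhds 1) := Phi_tendsto_atTop.comp harg
    have hcont : ContinuousAt (fun t : ℝ => t ^ r) 1 :=
      Real.continuousAt_rpow_const 1 r (Or.inl one_ne_zero)
    have := hcont.tendsto.comp hphi
    rw [Real.one_rpow] at this
    exact this

lemma gFun_exists_eq (hρ : 0 < ρ) (hr : 0 < r) {y : ℝ} (hy : y ∈ Set.Ioo (0:ℝ) 1) :
    ∃ z, gFun ρ r z = y := by
  obtain ⟨a, ha⟩ := ((gFun_tendsto_atBot hρ hr).eventually_const_lt hy.2).exists
  obtain ⟨b, hb⟩ := ((gFun_tendsto_atTop hρ hr).eventually_lt_const hy.1).exists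
  exact intermediate_value_univ b a (gFun_continuous hr) ⟨hb.le, ha.le⟩

end GLemmas

section Aux

lemma measurableSet_tendsto_fun' {α : Type*} [MeasurableSpace α] (u : ℕ → α → ℝ) (v : α → ℝ)
    (hu : ∀ n, Measurable (u n)) (hv : Measurable v) :
    MeasurableSet {x | Tendsto (fun n => u n x) atTop (nhds (v x))} := by
  have hset : {x | Tendsto (fun n => u n x) atTop (nhds (v x))}
      = ⋂ k : ℕ, ⋃ N : ℕ, ⋂ n : ℕ, ⋂ _ : N ≤ n, {x | |u n x - v x| < (1:ℝ)/(k+1)} := by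
    ext x
    simp only [Set.mem_iInter, Set.mem_iUnion, Set.mem_setOf_eq]
    constructor
    · intro h k
      obtain ⟨N, hN⟩ := (Metric.tendsto_atTop.1 h) ((1:ℝ)/(k+1)) (by positivity)
      exact ⟨N, fun n hn => by simpa [Real.dist_eq] using hN n hn⟩
    · intro h
      rw [Metric.tendsto_atTop]
      intro ε hε
      obtain ⟨k, hk⟩ := exists_nat_one_div_lt hε
      obtain ⟨N, hN⟩ := h k
      exact ⟨N, fun n hn => by rw [Real.dist_eq]; exact lt_trans (hN n hn) hk⟩
  rw [hset]
  refine MeasurableSet.iInter fun k => MeasurableSet.iUnion fun N => MeasurableSet.iInter fun n =>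
    MeasurableSet.iInter fun _ => ?_
  exact measurableSet_lt (((hu n).sub hv).abs) measurable_const

lemma indep_mono {Ω : Type*} {mΩ : MeasurableSpace Ω} {μ : Measure Ω}
    {m1 m2 m1' m2' : MeasurableSpace Ω}
    (h : Indep m1 m2 μ) (h1 : m1' ≤ m1) (h2 : m2' ≤ m2) : Indep m1' m2' μ :=
  fun t1 t2 ht1 ht2 => h t1 t2 (h1 _ ht1) (h2 _ ht2)

end Aux

/-- in the equicorrelated Gaussian null model with `ρ ∈ (0,1]`, `r > 0`,
the limit `L = lim_m Pr(((1/m)Σ p_i^r)^{1/r} ≤ c)` exists and `L ≤ α` iff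
`c^r ≤ g_{ρ,r}(-Φ⁻¹(α))`. -/
theorem stmt_13 {Ω : Type*} [MeasurableSpace Ω] (μ : Measure Ω) [IsProbabilityMeasure μ]
    (ρ r c α : ℝ) (hρ : ρ ∈ Set.Ioc (0:ℝ) 1) (hr : 0 < r)
    (hα : α ∈ Set.Ioo (0:ℝ) 1) (hc : c ∈ Set.Ioo (0:ℝ) 1)
    (Z : ℕ → Ω → ℝ) (hmeas : ∀ i, Measurable (Z i))
    (hindep : iIndepFun Z μ)
    (hlaw : ∀ i, μ.map (Z i) = (gaussianReal 0 1 : Measure ℝ)) :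
    ∃ L : ENNReal,
      Tendsto (fun m : ℕ =>
          μ {ω | ((1 / m : ℝ) * ∑ i ∈ Finset.Icc 1 m,
              Phi (-(Real.sqrt ρ * Z 0 ω) - Real.sqrt (1 - ρ) * Z i ω) ^ r) ^ (1 / r) ≤ c})
        atTop (nhds L) ∧
      (L ≤ ENNReal.ofReal α ↔ c ^ r ≤ gFun ρ r (-(PhiInv α))) := by
  obtain ⟨hρ0, hρ1⟩ := hρ
  -- step A : strong law of large numbers for each fixed z
  have slln : ∀ z : ℝ, ∀ᵐ ω ∂μ,
      Tendsto (fun m : ℕ => (∑ n ∈ Finset.range m, Ffun ρ r z (Z (n+1) ω)) / m)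
        atTop (nhds (gFun ρ r z)) := by
    intro z
    have hFzmeas : Measurable (fun x : ℝ => Ffun ρ r z x) := Ffun_measurable_right z
    set X : ℕ → Ω → ℝ := fun n ω => Ffun ρ r z (Z (n+1) ω) with hX
    have hXmeas : ∀ n, Measurable (X n) := fun n => hFzmeas.comp (hmeas (n+1))
    have hint : Integrable (X 0) μ := by
      apply Integrable.mono' (integrable_const (1:ℝ)) (hXmeas 0).aestronglyMeasurable
      exact Filter.Eventually.of_forall fun ω => Ffun_norm_le hr _ _
    have hindep' : Pairwise (Function.onFun (IndepFun · · μ) X) := by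
      intro i j hij
      exact (hindep.indepFun (show i+1 ≠ j+1 by omega)).comp hFzmeas hFzmeas
    have hident : ∀ i, IdentDistrib (X i) (X 0) μ μ := by
      intro i
      have hZ : IdentDistrib (Z (i+1)) (Z 1) μ μ :=
        ⟨(hmeas _).aemeasurable, (hmeas _).aemeasurable, by rw [hlaw, hlaw]⟩
      exact hZ.comp hFzmeas
    have hsl := strong_law_ae_real X hint hindep' hident
    have hmean : (μ[X 0]) = gFun ρ r z := by
      show (∫ ω, Ffun ρ r z (Z 1 ω) ∂μ) = gFun ρ r z
      rw [gFun_def, ← hlaw 1,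
        integral_map (hmeas 1).aemeasurable hFzmeas.aestronglyMeasurable]
    rwa [hmean] at hsl
  -- step B : almost sure convergence with random Z 0
  set W : Ω → (ℕ → ℝ) := fun ω n => Z (n+1) ω with hWdef
  have hWmeas : Measurable W := measurable_pi_lambda _ fun n => hmeas (n+1)
  haveI : IsProbabilityMeasure (μ.map W) := Measure.isProbabilityMeasure_map hWmeas.aemeasurable
  have hIndepZW : IndepFun (Z 0) W μ := by
    have h_le : ∀ n, MeasurableSpace.comap (Z n) inferInstance ≤ _ :=
      fun n => (hmeas n).comap_le
    have h := indep_biSup_compl h_le hindep {0}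
    have h1le : MeasurableSpace.comap (Z 0) inferInstance
        ≤ ⨆ n ∈ ({0} : Set ℕ), MeasurableSpace.comap (Z n) inferInstance :=
      le_biSup (fun n => MeasurableSpace.comap (Z n) inferInstance) (Set.mem_singleton 0)
    have h2le : MeasurableSpace.comap W inferInstance
        ≤ ⨆ n ∈ (({0} : Set ℕ)ᶜ), MeasurableSpace.comap (Z n) inferInstance := by
      rw [show (inferInstance : MeasurableSpace (ℕ → ℝ))
        = ⨆ n : ℕ, MeasurableSpace.comap (fun w : ℕ → ℝ => w n) inferInstance from rfl,
        MeasurableSpace.comap_iSup]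
      refine iSup_le fun n => ?_
      rw [MeasurableSpace.comap_comp]
      have heq : ((fun w : ℕ → ℝ => w n) ∘ W) = Z (n+1) := rfl
      rw [heq]
      exact le_biSup (fun n => MeasurableSpace.comap (Z n) inferInstance)
        (show (n+1) ∈ (({0} : Set ℕ)ᶜ) by simp)
    exact indep_mono h h1le h2le
  have hmap : μ.map (fun ω => (Z 0 ω, W ω)) = (μ.map (Z 0)).prod (μ.map W) :=
    (indepFun_iff_map_prod_eq_prod_map_map (hmeas 0).aemeasurable hWmeas.aemeasurable).1 hIndepZW
  set N : Set (ℝ × (ℕ → ℝ)) :=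
    {p | Tendsto (fun m : ℕ => (∑ n ∈ Finset.range m, Ffun ρ r p.1 (p.2 n)) / m)
      atTop (nhds (gFun ρ r p.1))}ᶜ with hNdef
  have hNmeas : MeasurableSet N := by
    apply MeasurableSet.compl
    apply measurableSet_tendsto_fun'
    · intro n
      apply Measurable.div_const
      apply Finset.measurable_sum
      intro i _
      exact Ffun_measurable_comp measurable_fst ((measurable_pi_apply i).comp measurable_snd)
    · exact (gFun_continuous hr).measurable.comp measurable_fst
  have hNnull : (μ.map (fun ω => (Z 0 ω, W ω))) N = 0 := by
    rw [hmap, Measure.prod_apply hNmeas]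
    have hz : ∀ z : ℝ, (μ.map W) (Prod.mk z ⁻¹' N) = 0 := by
      intro z
      rw [Measure.map_apply hWmeas (measurable_prodMk_left hNmeas)]
      exact ae_iff.1 (slln z)
    simp only [hz, lintegral_zero]
  have hasgood : ∀ᵐ ω ∂μ,
      Tendsto (fun m : ℕ => (∑ n ∈ Finset.range m, Ffun ρ r (Z 0 ω) (Z (n+1) ω)) / m)
        atTop (nhds (gFun ρ r (Z 0 ω))) := by
    rw [ae_iff]
    have hpre := Measure.map_apply (μ := μ) ((hmeas 0).prodMk hWmeas) hNmeas
    rw [hpre] at hNnull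
    exact hNnull
  -- the threshold z*
  have hcr : c ^ r ∈ Set.Ioo (0:ℝ) 1 :=
    ⟨Real.rpow_pos_of_pos hc.1 r, Real.rpow_lt_one hc.1.le hc.2 hr⟩
  obtain ⟨zs, hzs⟩ := gFun_exists_eq hρ0 hr hcr
  have hZ0ne : ∀ᵐ ω ∂μ, Z 0 ω ≠ zs := by
    rw [ae_iff]
    have hs : {ω | ¬ Z 0 ω ≠ zs} = Z 0 ⁻¹' {zs} := by ext ω; simp
    rw [hs, ← Measure.map_apply (hmeas 0) (measurableSet_singleton _), hlaw 0]
    exact gauss_singleton zs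
  -- the sequence of averages
  set q : ℕ → Ω → ℝ := fun m ω =>
    (1 / (m:ℝ)) * ∑ i ∈ Finset.Icc 1 m,
      Phi (-(Real.sqrt ρ * Z 0 ω) - Real.sqrt (1 - ρ) * Z i ω) ^ r with hqdef
  have hq0 : ∀ m ω, 0 ≤ q m ω := fun m ω =>
    mul_nonneg (by positivity)
      (Finset.sum_nonneg fun i _ => (Real.rpow_pos_of_pos (Phi_pos _) r).le)
  have hqmeas : ∀ m, Measurable (q m) := by
    intro m
    apply Measurable.const_mul
    apply Finset.measurable_sum
    intro i _
    exact Ffun_measurable_comp (hmeas 0) (hmeas i)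
  have hEm : ∀ m, MeasurableSet {ω | (q m ω) ^ (1/r) ≤ c} := fun m =>
    measurableSet_le ((hqmeas m).pow measurable_const) measurable_const
  have hcrpow : (c ^ r) ^ (1/r) = c := by
    rw [← Real.rpow_mul hc.1.le, mul_one_div_cancel hr.ne', Real.rpow_one]
  -- a.e. convergence of the indicators
  have hconv : ∀ᵐ ω ∂μ, Tendsto (fun m : ℕ => if (q m ω) ^ (1/r) ≤ c then (1:ℝ) else 0)
      atTop (nhds (if zs < Z 0 ω then (1:ℝ) else 0)) := by
    filter_upwards [hasgood, hZ0ne] with ω hgood hne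
    have hqω : (fun m : ℕ => q m ω)
        = fun m : ℕ => (∑ n ∈ Finset.range m, Ffun ρ r (Z 0 ω) (Z (n+1) ω)) / m := by
      funext m
      simp only [hqdef, Ffun]
      rw [← Finset.Ico_add_one_right_eq_Icc, Finset.sum_Ico_eq_sum_range]
      simp only [Nat.add_sub_cancel, Nat.succ_sub_one]
      rw [one_div, inv_mul_eq_div]
      congr 1
      exact Finset.sum_congr rfl fun i _ => by rw [add_comm]
    have htq : Tendsto (fun m : ℕ => q m ω) atTop (nhds (gFun ρ r (Z 0 ω))) := by
      rw [hqω]; exact hgood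
    rcases lt_trichotomy (Z 0 ω) zs with h | h | h
    · -- gFun (Z 0 ω) > c ^ r, indicators are eventually 0
      have hgt : c ^ r < gFun ρ r (Z 0 ω) := by
        rw [← hzs]; exact gFun_strictAnti hρ0 hr h
      refine Tendsto.congr' ?_ tendsto_const_nhds
      filter_upwards [htq.eventually_const_lt hgt] with m hm
      have hnot : ¬ (q m ω) ^ (1/r) ≤ c := by
        push_neg
        calc c = (c ^ r) ^ (1/r) := hcrpow.symm
          _ < (q m ω) ^ (1/r) := Real.rpow_lt_rpow hcr.1.le hm (by positivity)
      rw [if_neg (not_lt.2 h.le), if_neg hnot]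
    · exact absurd h hne
    · -- gFun (Z 0 ω) < c ^ r, indicators are eventually 1
      have hlt : gFun ρ r (Z 0 ω) < c ^ r := by
        rw [← hzs]; exact gFun_strictAnti hρ0 hr h
      refine Tendsto.congr' ?_ tendsto_const_nhds
      filter_upwards [htq.eventually_lt_const hlt] with m hm
      have hyes : (q m ω) ^ (1/r) ≤ c := by
        calc (q m ω) ^ (1/r) ≤ (c ^ r) ^ (1/r) :=
              Real.rpow_le_rpow (hq0 m ω) hm.le (by positivity)
          _ = c := hcrpow
      rw [if_pos h, if_pos hyes]
  -- dominated convergence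
  have hI_int : ∀ m, ∫ ω, (if (q m ω) ^ (1/r) ≤ c then (1:ℝ) else 0) ∂μ
      = (μ {ω | (q m ω) ^ (1/r) ≤ c}).toReal := by
    intro m
    rw [← measureReal_def, ← integral_indicator_one (hEm m)]
    congr 1
  have hAmeas : MeasurableSet (Z 0 ⁻¹' Set.Ioi zs) := (hmeas 0) measurableSet_Ioi
  have hJ_int : ∫ ω, (if zs < Z 0 ω then (1:ℝ) else 0) ∂μ
      = (μ (Z 0 ⁻¹' Set.Ioi zs)).toReal := by
    rw [← measureReal_def, ← integral_indicator_one hAmeas]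
    congr 1
  have hDCT : Tendsto (fun m : ℕ => ∫ ω, (if (q m ω) ^ (1/r) ≤ c then (1:ℝ) else 0) ∂μ)
      atTop (nhds (∫ ω, (if zs < Z 0 ω then (1:ℝ) else 0) ∂μ)) := by
    apply tendsto_integral_of_dominated_convergence (bound := fun _ => (1:ℝ))
    · intro m
      exact (Measurable.ite (hEm m) measurable_const measurable_const).aestronglyMeasurable
    · exact integrable_const 1
    · intro m
      refine Filter.Eventually.of_forall fun ω => ?_
      rw [Real.norm_eq_abs]
      split <;> simp
    · exact hconv
  have hμconv : Tendsto (fun m : ℕ => μ {ω | (q m ω) ^ (1/r) ≤ c})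
      atTop (nhds (μ (Z 0 ⁻¹' Set.Ioi zs))) := by
    have h1 := (ENNReal.continuous_ofReal.tendsto _).comp hDCT
    simp only [Function.comp_def, hI_int, hJ_int,
      ENNReal.ofReal_toReal (measure_ne_top μ _)] at h1
    exact h1
  refine ⟨μ (Z 0 ⁻¹' Set.Ioi zs), ?_, ?_⟩
  · exact hμconv
  · -- the iff
    have hL : μ (Z 0 ⁻¹' Set.Ioi zs) = (gaussianReal 0 1 : Measure ℝ) (Set.Ioi zs) := by
      rw [← hlaw 0, Measure.map_apply (hmeas 0) measurableSet_Ioi]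
    have hLtoReal : (μ (Z 0 ⁻¹' Set.Ioi zs)).toReal = 1 - Phi zs := by
      rw [hL]
      have h2 := gauss_Iic_add_Ioi zs
      have h3 := ENNReal.toReal_add (a := (gaussianReal 0 1 : Measure ℝ) (Set.Iic zs))
        (b := (gaussianReal 0 1 : Measure ℝ) (Set.Ioi zs)) (measure_ne_top _ _) (measure_ne_top _ _)
      rw [h2] at h3
      simp only [ENNReal.toReal_one] at h3
      rw [Phi] at *
      linarith
    have hPhiInv : Phi (PhiInv α) = α := Phi_PhiInv hα
    rw [ENNReal.le_ofReal_iff_toReal_le (measure_ne_top μ _) hα.1.le, hLtoReal, ← hzs]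
    have hiff : 1 - Phi zs ≤ α ↔ -(PhiInv α) ≤ zs := by
      rw [show (1:ℝ) - Phi zs = Phi (-zs) from (Phi_neg zs).symm]
      have h1 : Phi (-zs) ≤ Phi (PhiInv α) ↔ -zs ≤ PhiInv α := Phi_strictMono.le_iff_le
      rw [hPhiInv] at h1
      rw [h1, neg_le]
    rw [hiff, (gFun_strictAnti hρ0 hr).le_iff_ge]
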